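/- The sextic polynomial f6 is irreducible in ℂ[x1,x2,x3,x4,x5]. (This is the equation of the hypersurface D2 ⊂ P^4 = P(V_-^∨) which contains the locus of odd 2-torsion points of (1,11)-polarized abelian surfaces with canonical level structure.) -/

import Mathlib

open MvPolynomial Polynomial

/-- The sextic `f6` in variables `x1,…,x5` (here `X 0 = x1, …, X 4 = x5`),
the Pfaffian of the intertwining matrix `S`; its vanishing locus `D2 ⊂ P⁴`
contains the locus of odd 2-torsion points of `(1,11)`-polarized abelian surfaces. -/
noncomputable def sexticF6 : MvPolynomial (Fin 5) ℂ :=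
  -(X 0 ^ 2 * X 1 * X 2 ^ 3) + X 0 ^ 3 * X 2 * X 3 ^ 2 - X 1 ^ 3 * X 2 ^ 2 * X 4
    + X 0 * X 3 ^ 3 * X 4 ^ 2 + X 1 ^ 2 * X 3 * X 4 ^ 3
    + X 0 * X 1 ^ 4 * X 3 - X 1 * X 2 * X 3 ^ 4 - X 0 ^ 4 * X 1 * X 4
    + X 2 ^ 4 * X 3 * X 4 + X 0 * X 2 * X 4 ^ 4
    + X 0 * X 1 * X 2 ^ 2 * X 3 ^ 2 - X 0 ^ 2 * X 1 ^ 2 * X 2 * X 4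
    - X 0 * X 1 ^ 2 * X 3 ^ 2 * X 4 - X 0 ^ 2 * X 2 * X 3 * X 4 ^ 2
    + X 1 * X 2 ^ 2 * X 3 * X 4 ^ 2

namespace SexticAux

abbrev R := MvPolynomial (Fin 4) ℂ

noncomputable def a4 : R := -(X 0 * X 3)
noncomputable def a3 : R := X 1 * X 2 ^ 2
noncomputable def a2 : R := -(X 0 * X 1 ^ 3) - X 0 ^ 2 * X 1 * X 3 - X 1 * X 2 * X 3 ^ 2
noncomputable def a1 : R := X 2 ^ 3 * X 3 ^ 2 + X 0 ^ 4 * X 2 + X 1 * X 3 ^ 4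
    + X 0 * X 1 ^ 2 * X 2 ^ 2 - X 0 ^ 2 * X 2 ^ 2 * X 3
noncomputable def a0 : R := -(X 0 ^ 3 * X 1 ^ 2 * X 3) + X 0 ^ 2 * X 2 * X 3 ^ 3
    - X 0 * X 1 * X 2 ^ 4 + X 1 ^ 4 * X 2 * X 3 + X 0 * X 1 ^ 2 * X 2 * X 3 ^ 2

noncomputable def F : Polynomial R :=
  Polynomial.C a4 * Polynomial.X ^ 4 + Polynomial.C a3 * Polynomial.X ^ 3
    + Polynomial.C a2 * Polynomial.X ^ 2 + Polynomial.C a1 * Polynomial.X + Polynomial.C a0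

lemma x1 : (X 1 : MvPolynomial (Fin 5) ℂ) = X (Fin.succ 0) := rfl
lemma x2 : (X 2 : MvPolynomial (Fin 5) ℂ) = X (Fin.succ 1) := rfl
lemma x3 : (X 3 : MvPolynomial (Fin 5) ℂ) = X (Fin.succ 2) := rfl
lemma x4 : (X 4 : MvPolynomial (Fin 5) ℂ) = X (Fin.succ 3) := rfl

lemma hF : finSuccEquiv ℂ 4 sexticF6 = F := by
  simp only [sexticF6, F, a4, a3, a2, a1, a0, x1, x2, x3, x4, map_add, map_sub, map_neg, map_mul,
    map_pow, finSuccEquiv_X_zero, finSuccEquiv_X_succ]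
  ring

end SexticAux

namespace SexticAux

/-- specialization x1↦1, x2↦t, x3↦t, x4↦1 -/
noncomputable def ψ : R →+* Polynomial ℂ :=
  (MvPolynomial.aeval ![1, Polynomial.X, Polynomial.X, 1] : R →ₐ[ℂ] Polynomial ℂ).toRingHom

lemma ψ0 : ψ (X 0) = 1 := by simp [ψ]
lemma ψ1 : ψ (X 1) = Polynomial.X := by simp [ψ]
lemma ψ2 : ψ (X 2) = Polynomial.X := by simp [ψ]
lemma ψ3 : ψ (X 3) = 1 := by simp [ψ]

noncomputable def q : Polynomial (Polynomial ℂ) := F.map ψ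

lemma ψa4 : ψ a4 = -1 := by simp [a4, ψ0, ψ3]
lemma ψa3 : ψ a3 = Polynomial.X ^ 3 := by
  simp only [a3, map_mul, map_pow, ψ1, ψ2]; ring
lemma ψa2 : ψ a2 = -(Polynomial.X ^ 3) - Polynomial.X ^ 2 - Polynomial.X := by
  simp only [a2, map_sub, map_neg, map_mul, map_pow, ψ0, ψ1, ψ2, ψ3]; ring
lemma ψa1 : ψ a1 = Polynomial.X ^ 4 + Polynomial.X ^ 3 - Polynomial.X ^ 2
    + 2 * Polynomial.X := by
  simp only [a1, map_add, map_sub, map_mul, map_pow, ψ0, ψ1, ψ2, ψ3]; ring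
lemma ψa0 : ψ a0 = Polynomial.X ^ 3 - Polynomial.X ^ 2 + Polynomial.X := by
  simp only [a0, map_add, map_sub, map_neg, map_mul, map_pow, ψ0, ψ1, ψ2, ψ3]; ring

lemma hq : q = Polynomial.C (-1 : Polynomial ℂ) * Polynomial.X ^ 4
    + Polynomial.C (Polynomial.X ^ 3) * Polynomial.X ^ 3
    + Polynomial.C (-(Polynomial.X ^ 3) - Polynomial.X ^ 2 - Polynomial.X) * Polynomial.X ^ 2
    + Polynomial.C (Polynomial.X ^ 4 + Polynomial.X ^ 3 - Polynomial.X ^ 2 + 2 * Polynomial.X)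
        * Polynomial.X
    + Polynomial.C (Polynomial.X ^ 3 - Polynomial.X ^ 2 + Polynomial.X) := by
  simp only [q, F, Polynomial.map_add, Polynomial.map_mul, Polynomial.map_pow,
    Polynomial.map_C, Polynomial.map_X, ψa4, ψa3, ψa2, ψa1, ψa0]

end SexticAux

namespace SexticAux

noncomputable def b0 : Polynomial ℂ := Polynomial.X ^ 3 - Polynomial.X ^ 2 + Polynomial.X
noncomputable def b1 : Polynomial ℂ := Polynomial.X ^ 4 + Polynomial.X ^ 3 - Polynomial.X ^ 2
    + 2 * Polynomial.X
noncomputable def b2 : Polynomial ℂ := -(Polynomial.X ^ 3) - Polynomial.X ^ 2 - Polynomial.X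
noncomputable def b3 : Polynomial ℂ := Polynomial.X ^ 3
noncomputable def b4 : Polynomial ℂ := -1

lemma hq' : q = Polynomial.C b4 * Polynomial.X ^ 4 + Polynomial.C b3 * Polynomial.X ^ 3
    + Polynomial.C b2 * Polynomial.X ^ 2 + Polynomial.C b1 * Polynomial.X + Polynomial.C b0 := by
  rw [hq]; rfl

lemma qc0 : q.coeff 0 = b0 := by simp [hq']
lemma qc1 : q.coeff 1 = b1 := by simp [hq']
lemma qc2 : q.coeff 2 = b2 := by simp [hq']
lemma qc3 : q.coeff 3 = b3 := by simp [hq']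
lemma qc4 : q.coeff 4 = b4 := by simp [hq']

lemma qdeg : q.natDegree = 4 := by
  rw [hq']; compute_degree!
  simp [b4]

lemma qdeg' : q.degree = 4 := by
  rw [hq']; compute_degree!
  simp [b4]

lemma irreducible_q : Irreducible q := by
  apply Polynomial.irreducible_of_eisenstein_criterion
      (P := Ideal.span {(Polynomial.X : Polynomial ℂ)})
  · exact (Ideal.span_singleton_prime Polynomial.X_ne_zero).2 Polynomial.prime_X
  · rw [Polynomial.leadingCoeff, qdeg, qc4, Ideal.mem_span_singleton, b4]
    intro h
    simpa using Polynomial.natDegree_le_of_dvd h (by norm_num)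
  · intro n hn
    rw [qdeg'] at hn
    have hn4 : n < 4 := by exact_mod_cast hn
    rw [Ideal.mem_span_singleton, Polynomial.X_dvd_iff]
    interval_cases n <;>
      simp [qc0, qc1, qc2, qc3, b0, b1, b2, b3, Polynomial.coeff_one]
  · rw [qdeg']; norm_num
  · rw [Ideal.span_singleton_pow, Ideal.mem_span_singleton, qc0, b0]
    intro h
    have := Polynomial.X_pow_dvd_iff.mp h 1 (by norm_num)
    simp [Polynomial.coeff_one] at this
  · rw [Polynomial.isPrimitive_iff_isUnit_of_C_dvd]
    intro r hr
    have h4 := (Polynomial.C_dvd_iff_dvd_coeff r q).mp hr 4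
    rw [qc4, b4] at h4
    exact isUnit_of_dvd_unit h4 (by simp)

end SexticAux

namespace SexticAux

lemma Fc4 : F.coeff 4 = a4 := by simp [F]
lemma Fc3 : F.coeff 3 = a3 := by simp [F]

lemma a4_ne : a4 ≠ 0 := by
  simp only [a4, neg_ne_zero]
  exact mul_ne_zero (X_ne_zero 0) (X_ne_zero 3)

lemma a3_ne : a3 ≠ 0 := mul_ne_zero (X_ne_zero 1) (pow_ne_zero 2 (X_ne_zero 2))

lemma Fdeg : F.natDegree = 4 := by
  rw [F]; compute_degree!
  exact a4_ne

lemma F_ne : F ≠ 0 := fun h => a4_ne (by rw [← Fc4, h, Polynomial.coeff_zero])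

lemma q_ne : q ≠ 0 := fun h => by
  have h4 := qc4
  rw [h, Polynomial.coeff_zero, b4] at h4
  exact absurd h4.symm (by norm_num)

lemma prime_Xi (i : Fin 4) : Prime (X i : R) := by
  let e := (renameEquiv ℂ (Equiv.swap i 0)).trans (finSuccEquiv ℂ 3)
  rw [← MulEquiv.prime_iff e.toMulEquiv]
  have h : e.toMulEquiv (X i) = Polynomial.X := by
    show e (X i) = Polynomial.X
    simp [e, renameEquiv_apply, rename_X, Equiv.swap_apply_left, finSuccEquiv_X_zero]
  rw [h]
  exact Polynomial.prime_X

lemma X_not_dvd {i j : Fin 4} (h : i ≠ j) : ¬ ((X i : R) ∣ X j) := by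
  rw [X_dvd_X]; exact h

lemma dvd_X_cases {p : R} (hpirr : Irreducible p) {i : Fin 4} (hpi : p ∣ X i) :
    (X i : R) ∣ p := by
  have hXi : Irreducible (X i : R) := (prime_Xi i).irreducible
  exact hpirr.dvd_symm hXi hpi

lemma deg0 (c : R) (hdvd : Polynomial.C c ∣ F) : IsUnit c := by
  by_contra hc
  have hc4 : c ∣ X 0 * X 3 := by
    have := (Polynomial.C_dvd_iff_dvd_coeff c F).mp hdvd 4
    rw [Fc4, a4] at this
    exact (dvd_neg.mp this)
  have hc3 : c ∣ X 1 * X 2 ^ 2 := by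
    have := (Polynomial.C_dvd_iff_dvd_coeff c F).mp hdvd 3
    rwa [Fc3, a3] at this
  have hc0 : c ≠ 0 := by
    rintro rfl
    exact mul_ne_zero (X_ne_zero 0) (X_ne_zero 3) (zero_dvd_iff.mp hc4)
  obtain ⟨p, hpirr, hpc⟩ := WfDvdMonoid.exists_irreducible_factor hc hc0
  have hp : Prime p := UniqueFactorizationMonoid.irreducible_iff_prime.mp hpirr
  have hp4 : p ∣ X 0 ∨ p ∣ X 3 := hp.2.2 _ _ (hpc.trans hc4)
  have hp3 : p ∣ X 1 ∨ p ∣ X 2 := by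
    rcases hp.2.2 _ _ (hpc.trans hc3) with h | h
    · exact Or.inl h
    · exact Or.inr (hp.dvd_of_dvd_pow h)
  rcases hp4 with h4 | h4 <;> rcases hp3 with h3 | h3 <;>
    [ exact X_not_dvd (by decide) ((dvd_X_cases hpirr h4).trans h3);
      exact X_not_dvd (by decide) ((dvd_X_cases hpirr h4).trans h3);
      exact X_not_dvd (by decide) ((dvd_X_cases hpirr h4).trans h3);
      exact X_not_dvd (by decide) ((dvd_X_cases hpirr h4).trans h3)]

lemma irreducible_F : Irreducible F := by
  constructor
  · intro h
    have := Polynomial.natDegree_eq_zero_of_isUnit h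
    rw [Fdeg] at this
    norm_num at this
  · intro G H hGH
    have hG0 : G ≠ 0 := by rintro rfl; rw [zero_mul] at hGH; exact F_ne hGH
    have hH0 : H ≠ 0 := by rintro rfl; rw [mul_zero] at hGH; exact F_ne hGH
    have hsum : G.natDegree + H.natDegree = 4 := by
      rw [← Polynomial.natDegree_mul hG0 hH0, ← hGH, Fdeg]
    have hqGH : q = G.map ψ * H.map ψ := by rw [q, hGH, Polynomial.map_mul]
    have hψG0 : G.map ψ ≠ 0 := by
      intro h; rw [h, zero_mul] at hqGH; exact q_ne hqGH
    have hψH0 : H.map ψ ≠ 0 := by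
      intro h; rw [h, mul_zero] at hqGH; exact q_ne hqGH
    have hsum' : (G.map ψ).natDegree + (H.map ψ).natDegree = 4 := by
      rw [← Polynomial.natDegree_mul hψG0 hψH0, ← hqGH, qdeg]
    have hle1 : (G.map ψ).natDegree ≤ G.natDegree := Polynomial.natDegree_map_le
    have hle2 : (H.map ψ).natDegree ≤ H.natDegree := Polynomial.natDegree_map_le
    rcases irreducible_q.isUnit_or_isUnit hqGH with hu | hu
    · left
      have h0 : G.natDegree = 0 := by
        have := Polynomial.natDegree_eq_zero_of_isUnit hu
        omega
      obtain ⟨c, rfl⟩ := Polynomial.natDegree_eq_zero.mp h0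
      exact Polynomial.isUnit_C.mpr (deg0 c ⟨H, hGH⟩)
    · right
      have h0 : H.natDegree = 0 := by
        have := Polynomial.natDegree_eq_zero_of_isUnit hu
        omega
      obtain ⟨c, rfl⟩ := Polynomial.natDegree_eq_zero.mp h0
      exact Polynomial.isUnit_C.mpr (deg0 c ⟨G, by rw [hGH, mul_comm]⟩)

end SexticAux


/-- The sextic `f6` is irreducible in `ℂ[x1,…,x5]`. -/
theorem sexticF6_irreducible : Irreducible sexticF6 := by
  have := (MulEquiv.irreducible_iff (MvPolynomial.finSuccEquiv ℂ 4).toMulEquiv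
    (x := sexticF6)).mp
  apply this
  show Irreducible (MvPolynomial.finSuccEquiv ℂ 4 sexticF6)
  rw [SexticAux.hF]
  exact SexticAux.irreducible_F
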